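/- arXiv:1201.2384 — 3 statements merged into one kernel-verified Lean document; each statement's English description precedes it below -/
import Mathlib

section
/- Suppose all players share the same pure strategy set S_1 (so s_i = s_1 for all i), and for each player i fix a permutation σ_i of S_1. Let U = {x ∈ Δ : x_{iα} = x_{1σ_i(α)} for all i and α}. Let φ be an incentive function whose updating map T maps Δ into Δ, and suppose φ_{1σ_i(α)}(x) = φ_{iα}(x) for every x ∈ U, every player i, and every α. Then T leaves U invariant: T(x) ∈ U for every x ∈ U. -/
open Finset

/-- Mixed strategy profile space `Δ`: player `i` has `s i + 1` pure strategies
(so every player has at least one strategy). -/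
def Δset {n : ℕ} (s : Fin n → ℕ) : Set (∀ i, Fin (s i + 1) → ℝ) :=
  {x | (∀ i α, 0 ≤ x i α) ∧ ∀ i, ∑ α, x i α = 1}

/-- The `α`-th standard unit vector of `ℝ^{m+1}` (pure strategy `α`). -/
def pureVec {m : ℕ} (α : Fin (m + 1)) : Fin (m + 1) → ℝ :=
  fun β => if β = α then 1 else 0

/-- Multilinear extension of a payoff function defined on pure profiles. -/
noncomputable def mulExt {n : ℕ} {s : Fin n → ℕ} (u : (∀ j, Fin (s j + 1)) → ℝ)
    (x : ∀ i, Fin (s i + 1) → ℝ) : ℝ :=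
  ∑ p : ∀ j, Fin (s j + 1), (∏ j, x j (p j)) * u p

/-- The updating map `T(x)_i = (x_i + Σ_α φ_{iα}(x) e_{iα}) / (1 + Σ_β φ_{iβ}(x))`. -/
noncomputable def Tmap {n : ℕ} {s : Fin n → ℕ}
    (φ : (∀ i, Fin (s i + 1) → ℝ) → ∀ i, Fin (s i + 1) → ℝ)
    (x : ∀ i, Fin (s i + 1) → ℝ) : ∀ i, Fin (s i + 1) → ℝ :=
  fun i α => (x i α + φ x i α) / (1 + ∑ β, φ x i β)

/-- `φ` is an incentive function. -/
def IsInc {n : ℕ} {s : Fin n → ℕ}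
    (φ : (∀ i, Fin (s i + 1) → ℝ) → ∀ i, Fin (s i + 1) → ℝ) : Prop :=
  (∀ x i α, x i α = 0 → 0 ≤ φ x i α) ∧ ∀ x i, (∑ β, φ x i β) ≠ -1

/-- `x` is an incentive equilibrium for `φ`. -/
def IncEq {n : ℕ} {s : Fin n → ℕ}
    (φ : (∀ i, Fin (s i + 1) → ℝ) → ∀ i, Fin (s i + 1) → ℝ)
    (x : ∀ i, Fin (s i + 1) → ℝ) : Prop :=
  ∀ i α, φ x i α = x i α * ∑ β, φ x i β

/-- `x` is a Nash equilibrium: each player's payoff is the maximum over pure deviations. -/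
def NashEq {n : ℕ} {s : Fin n → ℕ} (u : Fin n → (∀ j, Fin (s j + 1)) → ℝ)
    (x : ∀ i, Fin (s i + 1) → ℝ) : Prop :=
  ∀ i, mulExt (u i) x =
    Finset.univ.sup' Finset.univ_nonempty
      (fun α => mulExt (u i) (Function.update x i (pureVec α)))


/-- If all players share the same strategy set and the incentive respects the
symmetries `σ_i` on `U = {x ∈ Δ | x_{iα} = x_{1 σ_i(α)}}`, then `T` leaves `U` invariant. -/
theorem Tmap_preserves_symmetric_set {n : ℕ} (hn : 0 < n) (m : ℕ)
    (σ : Fin n → Equiv.Perm (Fin (m + 1)))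
    (φ : (∀ i : Fin n, Fin ((fun _ : Fin n => m) i + 1) → ℝ) →
      ∀ i : Fin n, Fin ((fun _ : Fin n => m) i + 1) → ℝ)
    (hφ : IsInc φ)
    (hT : Set.MapsTo (Tmap φ) (Δset (fun _ : Fin n => m)) (Δset (fun _ : Fin n => m)))
    (hsym : ∀ x ∈ {x ∈ Δset (fun _ : Fin n => m) |
        ∀ i α, x i α = x ⟨0, hn⟩ (σ i α)},
      ∀ i α, φ x ⟨0, hn⟩ (σ i α) = φ x i α) :
    ∀ x ∈ {x ∈ Δset (fun _ : Fin n => m) | ∀ i α, x i α = x ⟨0, hn⟩ (σ i α)},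
      Tmap φ x ∈ {x ∈ Δset (fun _ : Fin n => m) | ∀ i α, x i α = x ⟨0, hn⟩ (σ i α)} := by
  intro x hx
  refine ⟨hT hx.1, ?_⟩
  intro i α
  have hsum : ∑ β, φ x i β = ∑ β, φ x ⟨0, hn⟩ β := by
    calc ∑ β, φ x i β = ∑ β, φ x ⟨0, hn⟩ (σ i β) := by
          refine Finset.sum_congr rfl fun β _ => (hsym x hx i β).symm
      _ = ∑ β, φ x ⟨0, hn⟩ β := Fintype.sum_equiv (σ i) _ _ (fun _ => rfl)
  simp only [Tmap, hsum, hx.2 i α, hsym x hx i α]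
end

section
/- Let BR : Δ → ∏_i ℝ^{s_i} be a (tie-broken) best-reply function: for every x ∈ Δ and player i, BR_{iα}(x) ∈ {0,1} for all α, Σ_α BR_{iα}(x) = 1, and BR_{iα}(x) = 1 implies u_i(e_{iα}, x_{-i}) = max_{γ ∈ S_i} u_i(e_{iγ}, x_{-i}). Then every incentive equilibrium of BR is a Nash equilibrium: if x̂ ∈ Δ satisfies BR_{iα}(x̂) = x̂_{iα} · Σ_β BR_{iβ}(x̂) for all i, α, then u_i(x̂) = max_{α ∈ S_i} u_i(e_{iα}, x̂_{-i}) for every player i. -/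
open Finset

/-- Every incentive equilibrium of a (tie-broken) best-reply incentive is a Nash equilibrium. -/
theorem best_reply_incentive_equilibrium_isNash {n : ℕ} (hn : 0 < n) (s : Fin n → ℕ)
    (u : Fin n → (∀ j, Fin (s j + 1)) → ℝ)
    (BR : (∀ i, Fin (s i + 1) → ℝ) → ∀ i, Fin (s i + 1) → ℝ)
    (hBR01 : ∀ x ∈ Δset s, ∀ i α, BR x i α = 0 ∨ BR x i α = 1)
    (hBRsum : ∀ x ∈ Δset s, ∀ i, ∑ α, BR x i α = 1)
    (hBRbest : ∀ x ∈ Δset s, ∀ i α, BR x i α = 1 →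
      mulExt (u i) (Function.update x i (pureVec α)) =
        Finset.univ.sup' Finset.univ_nonempty
          (fun γ => mulExt (u i) (Function.update x i (pureVec γ))))
    (x : ∀ i, Fin (s i + 1) → ℝ) (hx : x ∈ Δset s) (heq : IncEq BR x) :
    NashEq u x := by
  intro i
  have hsum := hBRsum x hx i
  have hxe : ∀ α, BR x i α = x i α := fun α => by
    rw [heq i α, hsum, mul_one]
  obtain ⟨α, hα⟩ : ∃ α, BR x i α = 1 := by
    by_contra h
    push_neg at h
    have hz : ∀ α, BR x i α = 0 := fun α => (hBR01 x hx i α).resolve_right (h α)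
    simp [hz] at hsum
  have hnn : ∀ β, (0:ℝ) ≤ BR x i β := fun β => by
    rcases hBR01 x hx i β with h | h <;> simp [h]
  have h0 : ∀ β, β ≠ α → BR x i β = 0 := by
    have hsplit := Finset.add_sum_erase Finset.univ (BR x i) (Finset.mem_univ α)
    rw [hsum, hα] at hsplit
    have hrest : ∑ β ∈ Finset.univ.erase α, BR x i β = 0 := by linarith
    intro β hβ
    have := (Finset.sum_eq_zero_iff_of_nonneg (fun b _ => hnn b)).mp hrest
    exact this β (Finset.mem_erase.mpr ⟨hβ, Finset.mem_univ β⟩)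
  have hxp : x i = pureVec α := by
    funext β
    rw [← hxe β, pureVec]
    by_cases h : β = α
    · simp [h, hα]
    · simp [h, h0 β h]
  have hupd : Function.update x i (pureVec α) = x := by
    rw [← hxp, Function.update_eq_self]
  conv_lhs => rw [← hupd]
  exact hBRbest x hx i α hα
end

section
/- Fix ε > 0 and define the ε-Nash incentive φ^ε_{iα}(x) = (u_i(e_{iα}, x_{-i}) − u_i(x) − ε)_+, where (z)_+ = max(0, z). A point x̂ ∈ Δ is an incentive equilibrium for φ^ε (i.e., φ^ε_{iα}(x̂) = x̂_{iα} · Σ_β φ^ε_{iβ}(x̂) for all i, α) if and only if x̂ is an ε-equilibrium, i.e., u_i(x̂) ≥ u_i(e_{iα}, x̂_{-i}) − ε for every player i and every strategy α. -/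
open Finset

lemma mulExt_update_sum {n : ℕ} {s : Fin n → ℕ} (u : (∀ j, Fin (s j + 1)) → ℝ)
    (x : ∀ i, Fin (s i + 1) → ℝ) (i : Fin n) :
    ∑ α, x i α * mulExt u (Function.update x i (pureVec α)) = mulExt u x := by
  simp only [mulExt, Finset.mul_sum]
  rw [Finset.sum_comm]
  refine Finset.sum_congr rfl fun p _ => ?_
  have h1 : ∀ α : Fin (s i + 1), (∏ j, Function.update x i (pureVec α) j (p j))
      = pureVec α (p i) * ∏ j ∈ Finset.univ.erase i, x j (p j) := by
    intro α
    rw [← Finset.mul_prod_erase _ _ (Finset.mem_univ i)]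
    congr 1
    · simp
    · exact Finset.prod_congr rfl fun j hj => by
        rw [Function.update_of_ne (Finset.ne_of_mem_erase hj)]
  have h2 : (∏ j, x j (p j)) = x i (p i) * ∏ j ∈ Finset.univ.erase i, x j (p j) :=
    (Finset.mul_prod_erase _ _ (Finset.mem_univ i)).symm
  rw [h2, Finset.sum_congr rfl (fun α _ => by rw [h1 α])]
  rw [Finset.sum_eq_single (p i)]
  · simp [pureVec]; ring
  · intro α _ hα; simp [pureVec, Ne.symm hα]
  · simp

/-- For the `ε`-Nash incentive `φ^ε_{iα}(x) = (u_i(e_{iα},x_{-i}) - u_i(x) - ε)_+`,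
a point of `Δ` is an incentive equilibrium iff it is an `ε`-equilibrium. -/
theorem epsilon_incentive_equilibrium_iff {n : ℕ} (hn : 0 < n) (s : Fin n → ℕ)
    (u : Fin n → (∀ j, Fin (s j + 1)) → ℝ) (ε : ℝ) (hε : 0 < ε)
    (φε : (∀ i, Fin (s i + 1) → ℝ) → ∀ i, Fin (s i + 1) → ℝ)
    (hdef : ∀ x i α, φε x i α =
      max 0 (mulExt (u i) (Function.update x i (pureVec α)) - mulExt (u i) x - ε))
    (x : ∀ i, Fin (s i + 1) → ℝ) (hx : x ∈ Δset s) :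
    IncEq φε x ↔
      ∀ i α, mulExt (u i) x ≥ mulExt (u i) (Function.update x i (pureVec α)) - ε := by
  obtain ⟨hx0, hx1⟩ := hx
  have hφ0 : ∀ i α, 0 ≤ φε x i α := fun i α => by rw [hdef]; exact le_max_left _ _
  constructor
  · intro heq i α
    by_contra hlt
    push_neg at hlt
    set S := ∑ β, φε x i β with hS
    have hSpos : 0 < S := by
      have : 0 < φε x i α := by
        rw [hdef]; exact lt_max_of_lt_right (by linarith)
      exact lt_of_lt_of_le this (Finset.single_le_sum (fun β _ => hφ0 i β) (Finset.mem_univ α))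
    have hsum : ∑ β, x i β * (mulExt (u i) (Function.update x i (pureVec β))
        - mulExt (u i) x - ε) = -ε := by
      have := mulExt_update_sum (u i) x i
      have h1 := hx1 i
      simp only [mul_sub]
      rw [Finset.sum_sub_distrib, Finset.sum_sub_distrib, this,
        ← Finset.sum_mul, ← Finset.sum_mul, h1]
      ring
    have : ∃ β, x i β * (mulExt (u i) (Function.update x i (pureVec β))
        - mulExt (u i) x - ε) < 0 := by
      by_contra hall
      push_neg at hall
      have : (0:ℝ) ≤ -ε := hsum ▸ Finset.sum_nonneg (fun β _ => hall β)
      linarith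
    obtain ⟨β, hβ⟩ := this
    have hxβ : 0 < x i β := by
      rcases lt_or_eq_of_le (hx0 i β) with h | h
      · exact h
      · rw [← h] at hβ; simp at hβ
    have hneg : mulExt (u i) (Function.update x i (pureVec β)) - mulExt (u i) x - ε < 0 := by
      by_contra h; push_neg at h; nlinarith
    have hzero : φε x i β = 0 := by rw [hdef]; exact max_eq_left (le_of_lt hneg)
    have := heq i β
    rw [hzero] at this
    have : S = 0 := by
      rcases mul_eq_zero.mp this.symm with h | h
      · exact absurd h (ne_of_gt hxβ)
      · exact h
    linarith
  · intro h i α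
    have hz : ∀ β, φε x i β = 0 := fun β => by
      rw [hdef]; exact max_eq_left (by have := h i β; linarith)
    simp [hz]
end
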